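/- Suppose A(t) : D ⊂ X → X, t ∈ [0,1], are closed linear operators with common dense domain D such that 1 − A(t) is boundedly invertible for each t, and suppose that for each x ∈ D the map t ↦ A(t)x is continuously differentiable. Then B(t,s) := (1 − A(t))(1 − A(s))⁻¹ is uniformly bounded in operator norm on [0,1] × [0,1]. -/

import Mathlib

/-- Kato's condition (i): if `A t : D → X` are closed operators with common dense domain,
`1 - A t` has bounded inverse `R t`, and `t ↦ A t x` is C¹ for each `x ∈ D`, then
`B(t,s) = (1 - A t)(1 - A s)⁻¹` is uniformly bounded on `[0,1]²`. -/
theorem stmt10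
    {X : Type*} [NormedAddCommGroup X] [NormedSpace ℝ X] [CompleteSpace X]
    (D : Submodule ℝ X) (hD : Dense (D : Set X))
    (A : ℝ → D →ₗ[ℝ] X)
    (hclosed : ∀ t, IsClosed {p : X × X | ∃ h : p.1 ∈ D, A t ⟨p.1, h⟩ = p.2})
    (R : ℝ → X →L[ℝ] X) (hmem : ∀ s x, R s x ∈ D)
    (hR1 : ∀ s x, (R s x : X) - A s ⟨R s x, hmem s x⟩ = x)
    (hR2 : ∀ s (y : D), R s ((y : X) - A s y) = y)
    (hC1 : ∀ y : D, ∃ A' : ℝ → X,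
      (∀ t ∈ Set.Icc (0:ℝ) 1, HasDerivWithinAt (fun t => A t y) (A' t) (Set.Icc 0 1) t) ∧
      ContinuousOn A' (Set.Icc (0:ℝ) 1)) :
    ∃ M : ℝ, ∀ t ∈ Set.Icc (0:ℝ) 1, ∀ s ∈ Set.Icc (0:ℝ) 1, ∀ x : X,
      ‖(R s x : X) - A t ⟨R s x, hmem s x⟩‖ ≤ M * ‖x‖ := by
  classical
  -- The graph of `A 0` as a submodule of `X × X`.
  let G : Submodule ℝ (X × X) :=
  { carrier := {p : X × X | ∃ h : p.1 ∈ D, A 0 ⟨p.1, h⟩ = p.2}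
    add_mem' := by
      rintro p q ⟨hp, hp2⟩ ⟨hq, hq2⟩
      refine ⟨D.add_mem hp hq, ?_⟩
      have h : (⟨(p + q).1, D.add_mem hp hq⟩ : D) = ⟨p.1, hp⟩ + ⟨q.1, hq⟩ := rfl
      rw [h, map_add, hp2, hq2]; rfl
    zero_mem' := by
      refine ⟨D.zero_mem, ?_⟩
      have h : (⟨(0 : X × X).1, D.zero_mem⟩ : D) = 0 := rfl
      rw [h, map_zero]; rfl
    smul_mem' := by
      rintro c p ⟨hp, hp2⟩
      refine ⟨D.smul_mem c hp, ?_⟩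
      have h : (⟨(c • p).1, D.smul_mem c hp⟩ : D) = c • (⟨p.1, hp⟩ : D) := rfl
      rw [h, map_smul, hp2]; rfl }
  have hGc : IsClosed (G : Set (X × X)) := hclosed 0
  haveI : CompleteSpace G := hGc.completeSpace_coe
  have memD : ∀ g : G, (g : X × X).1 ∈ D := fun g => g.2.choose
  have hA0 : ∀ g : G, A 0 ⟨(g : X × X).1, memD g⟩ = (g : X × X).2 := fun g => g.2.choose_spec
  -- The projection `G →ₗ D`.
  let Pr : G →ₗ[ℝ] D :=
  { toFun := fun g => ⟨(g : X × X).1, memD g⟩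
    map_add' := fun g h => by apply Subtype.ext; rfl
    map_smul' := fun c g => by apply Subtype.ext; rfl }
  have hPrval : ∀ g : G, ((Pr g : D) : X) = (g : X × X).1 := fun g => rfl
  -- The operators `A t` as bounded operators on `G` (closed graph theorem).
  have hgraphA : ∀ t, IsClosed (((A t).comp Pr).graph : Set (G × X)) := by
    intro t
    have : (((A t).comp Pr).graph : Set (G × X)) =
        (fun q : G × X => (((q.1 : X × X).1, q.2) : X × X)) ⁻¹'
          {p : X × X | ∃ h : p.1 ∈ D, A t ⟨p.1, h⟩ = p.2} := by
      ext q
      constructor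
      · intro hq
        have hq' : A t (Pr q.1) = q.2 := ((LinearMap.mem_graph_iff _ _).mp hq).symm
        exact ⟨memD q.1, hq'⟩
      · rintro ⟨h, he⟩
        refine (LinearMap.mem_graph_iff _ _).mpr ?_
        have h2 : (⟨(q.1 : X × X).1, h⟩ : D) = Pr q.1 := rfl
        rw [h2] at he
        exact he.symm
    rw [this]
    refine (hclosed t).preimage ?_
    exact ((continuous_fst.comp (continuous_subtype_val.comp continuous_fst)).prodMk
      continuous_snd)
  let Fc : ℝ → G →L[ℝ] X := fun t =>
    ContinuousLinearMap.ofIsClosedGraph (g := (A t).comp Pr) (hgraphA t)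
  have hFc : ∀ t (g : G), Fc t g = A t (Pr g) := fun t g => rfl
  -- The resolvents `R s` as bounded operators `X → G` (closed graph theorem).
  let ρlin : ℝ → X →ₗ[ℝ] G := fun s =>
  { toFun := fun x => ⟨(R s x, A 0 ⟨R s x, hmem s x⟩), ⟨hmem s x, rfl⟩⟩
    map_add' := fun x y => by
      apply Subtype.ext; apply Prod.ext
      · exact map_add (R s) x y
      · show A 0 ⟨R s (x + y), _⟩ = A 0 ⟨R s x, _⟩ + A 0 ⟨R s y, _⟩
        have h : (⟨R s (x + y), hmem s (x + y)⟩ : D)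
            = ⟨R s x, hmem s x⟩ + ⟨R s y, hmem s y⟩ :=
          Subtype.ext (map_add (R s) x y)
        rw [h, map_add]
    map_smul' := fun c x => by
      apply Subtype.ext; apply Prod.ext
      · exact map_smul (R s) c x
      · show A 0 ⟨R s (c • x), _⟩ = c • A 0 ⟨R s x, _⟩
        have h : (⟨R s (c • x), hmem s (c • x)⟩ : D) = c • (⟨R s x, hmem s x⟩ : D) :=
          Subtype.ext (map_smul (R s) c x)
        rw [h, map_smul] }
  have hgraphρ : ∀ s, IsClosed ((ρlin s).graph : Set (X × G)) := by
    intro s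
    have : ((ρlin s).graph : Set (X × G)) = {q : X × G | R s q.1 = (q.2 : X × X).1} := by
      ext q
      constructor
      · intro hq
        have hq' : ρlin s q.1 = q.2 := ((LinearMap.mem_graph_iff _ _).mp hq).symm
        show R s q.1 = (q.2 : X × X).1
        rw [← hq']; rfl
      · intro hq
        refine (LinearMap.mem_graph_iff _ _).mpr ?_
        symm
        apply Subtype.ext; apply Prod.ext
        · exact hq
        · show A 0 ⟨R s q.1, hmem s q.1⟩ = (q.2 : X × X).2
          have h : (⟨R s q.1, hmem s q.1⟩ : D) = ⟨(q.2 : X × X).1, memD q.2⟩ :=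
            Subtype.ext hq
          rw [h]; exact hA0 q.2
    rw [this]
    exact isClosed_eq ((R s).continuous.comp continuous_fst)
      ((continuous_fst.comp (continuous_subtype_val.comp continuous_snd)))
  let ρ : ℝ → X →L[ℝ] G := fun s =>
    ContinuousLinearMap.ofIsClosedGraph (g := ρlin s) (hgraphρ s)
  have hρfst : ∀ s x, ((ρ s x : G) : X × X).1 = R s x := fun s x => rfl
  -- norm inequality in G
  have hnormfst : ∀ g : G, ‖(g : X × X).1‖ ≤ ‖g‖ := fun g => norm_fst_le (g : X × X)
  -- Banach–Steinhaus 1: uniform bound on ‖Fc t‖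
  obtain ⟨C₁, hC₁⟩ : ∃ C, ∀ i : Set.Icc (0:ℝ) 1, ‖Fc i.1‖ ≤ C := by
    apply banach_steinhaus
    intro g
    obtain ⟨A', hd, _⟩ := hC1 (Pr g)
    obtain ⟨C, hC⟩ := isCompact_Icc.exists_bound_of_continuousOn
      (f := fun t => A t (Pr g)) (fun t ht => (hd t ht).continuousWithinAt)
    exact ⟨C, fun i => by rw [hFc]; exact hC i.1 i.2⟩
  -- Banach–Steinhaus 2: uniform Lipschitz bound via difference quotients
  let H : Set.Icc (0:ℝ) 1 × Set.Icc (0:ℝ) 1 → G →L[ℝ] X := fun p =>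
    ((p.1.1 : ℝ) - p.2.1)⁻¹ • (Fc p.1.1 - Fc p.2.1)
  obtain ⟨C₂, hC₂⟩ : ∃ C, ∀ p, ‖H p‖ ≤ C := by
    apply banach_steinhaus
    intro g
    obtain ⟨A', hd, hc⟩ := hC1 (Pr g)
    obtain ⟨K, hK⟩ := isCompact_Icc.exists_bound_of_continuousOn hc
    have hK0 : 0 ≤ K := le_trans (norm_nonneg _) (hK 0 ⟨le_refl 0, zero_le_one⟩)
    refine ⟨K, fun p => ?_⟩
    rcases eq_or_ne (p.1.1 : ℝ) p.2.1 with h | h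
    · simp only [H, h, sub_self, inv_zero, zero_smul,
        ContinuousLinearMap.zero_apply, norm_zero]
      exact hK0
    · have hmv : ‖A p.1.1 (Pr g) - A p.2.1 (Pr g)‖ ≤ K * ‖(p.1.1 : ℝ) - p.2.1‖ :=
        (convex_Icc (0:ℝ) 1).norm_image_sub_le_of_norm_hasDerivWithin_le hd hK p.2.2 p.1.2
      have habs : ‖(p.1.1 : ℝ) - p.2.1‖ ≠ 0 := by
        simpa using sub_ne_zero_of_ne h
      show ‖((p.1.1 : ℝ) - p.2.1)⁻¹ • (Fc p.1.1 g - Fc p.2.1 g)‖ ≤ K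
      rw [norm_smul, norm_inv]
      rw [inv_mul_le_iff₀ (lt_of_le_of_ne (norm_nonneg _) (Ne.symm habs))]
      calc ‖Fc p.1.1 g - Fc p.2.1 g‖ = ‖A p.1.1 (Pr g) - A p.2.1 (Pr g)‖ := rfl
        _ ≤ K * ‖(p.1.1 : ℝ) - p.2.1‖ := hmv
        _ = ‖(p.1.1 : ℝ) - p.2.1‖ * K := mul_comm _ _
  have hC₂0 : 0 ≤ C₂ := by
    have := hC₂ (⟨0, le_refl 0, zero_le_one⟩, ⟨0, le_refl 0, zero_le_one⟩)
    exact le_trans (ContinuousLinearMap.opNorm_nonneg _) this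
  have hC₁0 : 0 ≤ C₁ := by
    have := hC₁ ⟨0, le_refl 0, zero_le_one⟩
    exact le_trans (ContinuousLinearMap.opNorm_nonneg _) this
  -- uniform Lipschitz estimate
  have hlip : ∀ t ∈ Set.Icc (0:ℝ) 1, ∀ s ∈ Set.Icc (0:ℝ) 1, ∀ g : G,
      ‖Fc t g - Fc s g‖ ≤ C₂ * |t - s| * ‖g‖ := by
    intro t ht s hs g
    rcases eq_or_ne t s with h | h
    · simp [h]
    · have hp := hC₂ (⟨t, ht⟩, ⟨s, hs⟩)
      have hH : Fc t g - Fc s g = (t - s) • (H (⟨t, ht⟩, ⟨s, hs⟩) g) := by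
        show Fc t g - Fc s g = (t - s) • ((t - s)⁻¹ • ((Fc t - Fc s) g))
        rw [smul_smul, mul_inv_cancel₀ (sub_ne_zero_of_ne h), one_smul]
        rfl
      rw [hH, norm_smul, Real.norm_eq_abs]
      have := (H (⟨t, ht⟩, ⟨s, hs⟩)).le_opNorm g
      calc |t - s| * ‖H (⟨t, ht⟩, ⟨s, hs⟩) g‖
          ≤ |t - s| * (C₂ * ‖g‖) := by
            apply mul_le_mul_of_nonneg_left _ (abs_nonneg _)
            exact le_trans this (mul_le_mul_of_nonneg_right hp (norm_nonneg g))
        _ = C₂ * |t - s| * ‖g‖ := by ring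
  -- key identities
  have id2 : ∀ t x, ((ρ t x : G) : X × X).1 - Fc t (ρ t x) = x := by
    intro t x
    exact hR1 t x
  have id3 : ∀ s (g : G), ρ s ((g : X × X).1 - Fc s g) = g := by
    intro s g
    apply Subtype.ext; apply Prod.ext
    · show R s ((g : X × X).1 - A s (Pr g)) = (g : X × X).1
      exact hR2 s (Pr g)
    · show A 0 ⟨R s ((g : X × X).1 - A s (Pr g)), _⟩ = (g : X × X).2
      have hfst : R s ((g : X × X).1 - A s (Pr g)) = (g : X × X).1 := hR2 s (Pr g)
      have h : (⟨R s ((g : X × X).1 - A s (Pr g)), hmem s _⟩ : D)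
          = ⟨(g : X × X).1, memD g⟩ := Subtype.ext hfst
      rw [h]; exact hA0 g
  -- local boundedness of ‖ρ t‖
  have hloc : ∀ s ∈ Set.Icc (0:ℝ) 1, ∀ t ∈ Set.Icc (0:ℝ) 1,
      C₂ * |t - s| * ‖ρ s‖ ≤ 1/2 → ‖ρ t‖ ≤ 2 * ‖ρ s‖ := by
    intro s hs t ht hsmall
    apply ContinuousLinearMap.opNorm_le_bound _ (by positivity)
    intro x
    set g : G := ρ t x with hg
    have h1 : (g : X × X).1 - Fc s g = x + (Fc t g - Fc s g) := by
      have h0 := id2 t x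
      rw [← hg] at h0
      rw [← h0]; abel
    have h2 : ‖g‖ ≤ ‖ρ s‖ * (‖x‖ + C₂ * |t - s| * ‖g‖) := by
      calc ‖g‖ = ‖ρ s ((g : X × X).1 - Fc s g)‖ := by rw [id3 s g]
        _ ≤ ‖ρ s‖ * ‖(g : X × X).1 - Fc s g‖ := (ρ s).le_opNorm _
        _ ≤ ‖ρ s‖ * (‖x‖ + C₂ * |t - s| * ‖g‖) := by
            apply mul_le_mul_of_nonneg_left _ (ContinuousLinearMap.opNorm_nonneg (ρ s))
            rw [h1]
            exact le_trans (norm_add_le _ _)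
              (add_le_add_right (hlip t ht s hs g) _)
    have hgnn : (0:ℝ) ≤ ‖g‖ := norm_nonneg _
    have hρnn : (0:ℝ) ≤ ‖ρ s‖ := ContinuousLinearMap.opNorm_nonneg (ρ s)
    nlinarith [mul_le_mul_of_nonneg_right hsmall hgnn]
  -- compactness argument
  set δ : ℝ → ℝ := fun s => (2 * (C₂ * ‖ρ s‖ + 1))⁻¹ with hδ
  have hδpos : ∀ s, 0 < δ s := by
    intro s
    have : (0:ℝ) < 2 * (C₂ * ‖ρ s‖ + 1) := by positivity
    exact inv_pos.mpr this
  obtain ⟨Fin, hFin⟩ := isCompact_Icc.elim_finite_subcover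
    (fun i : Set.Icc (0:ℝ) 1 => Metric.ball (i.1 : ℝ) (δ i.1))
    (fun i => Metric.isOpen_ball)
    (fun s hs => Set.mem_iUnion.mpr ⟨⟨s, hs⟩, Metric.mem_ball_self (hδpos s)⟩)
  have hFinne : Fin.Nonempty := by
    have h0 : (0:ℝ) ∈ Set.Icc (0:ℝ) 1 := ⟨le_refl 0, zero_le_one⟩
    obtain ⟨i, hi, _⟩ := Set.mem_iUnion₂.mp (hFin h0)
    exact ⟨i, hi⟩
  set M₃ : ℝ := 2 * Fin.sup' hFinne (fun i => ‖ρ i.1‖) with hM₃def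
  have hM₃ : ∀ t ∈ Set.Icc (0:ℝ) 1, ‖ρ t‖ ≤ M₃ := by
    intro t ht
    obtain ⟨i, hi, hball⟩ := Set.mem_iUnion₂.mp (hFin ht)
    have hd : |t - (i.1 : ℝ)| < δ i.1 := by
      rw [← Real.dist_eq]; exact hball
    have hsmall : C₂ * |t - (i.1 : ℝ)| * ‖ρ i.1‖ ≤ 1/2 := by
      have hb : (0:ℝ) ≤ C₂ * ‖ρ i.1‖ := mul_nonneg hC₂0 (ContinuousLinearMap.opNorm_nonneg _)
      have hδval : δ i.1 = (2 * (C₂ * ‖ρ i.1‖ + 1))⁻¹ := rfl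
      have h2 : (0:ℝ) < 2 * (C₂ * ‖ρ i.1‖ + 1) := by positivity
      have := hd.le
      rw [hδval] at this
      have h3 : C₂ * ‖ρ i.1‖ * |t - (i.1 : ℝ)| ≤
          (C₂ * ‖ρ i.1‖) * (2 * (C₂ * ‖ρ i.1‖ + 1))⁻¹ :=
        mul_le_mul_of_nonneg_left this hb
      have h4 : (C₂ * ‖ρ i.1‖) * (2 * (C₂ * ‖ρ i.1‖ + 1))⁻¹ ≤ 1/2 := by
        rw [mul_inv_le_iff₀ h2]
        nlinarith
      nlinarith
    calc ‖ρ t‖ ≤ 2 * ‖ρ i.1‖ := hloc i.1 i.2 t ht hsmall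
      _ ≤ M₃ := by
          rw [hM₃def]
          have := Finset.le_sup' (fun i : Set.Icc (0:ℝ) 1 => ‖ρ i.1‖) hi
          linarith
  have hM₃0 : 0 ≤ M₃ := le_trans (ContinuousLinearMap.opNorm_nonneg _) (hM₃ 0 ⟨le_refl 0, zero_le_one⟩)
  -- conclusion
  refine ⟨(1 + C₁) * M₃, ?_⟩
  intro t ht s hs x
  have hkey : (R s x : X) - A t ⟨R s x, hmem s x⟩
      = ((ρ s x : G) : X × X).1 - Fc t (ρ s x) := rfl
  rw [hkey]
  have h1 : ‖((ρ s x : G) : X × X).1 - Fc t (ρ s x)‖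
      ≤ ‖ρ s x‖ + C₁ * ‖ρ s x‖ := by
    refine le_trans (norm_sub_le _ _) (add_le_add (hnormfst _) ?_)
    exact le_trans ((Fc t).le_opNorm _)
      (mul_le_mul_of_nonneg_right (hC₁ ⟨t, ht⟩) (norm_nonneg _))
  have h2 : ‖ρ s x‖ ≤ M₃ * ‖x‖ :=
    le_trans ((ρ s).le_opNorm x) (mul_le_mul_of_nonneg_right (hM₃ s hs) (norm_nonneg _))
  have hxnn : (0:ℝ) ≤ ‖x‖ := norm_nonneg _
  nlinarith
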